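/- Let q be a self-join-free Boolean conjunctive query whose attack graph contains a strong cycle. Then the attack graph of q contains a strong cycle of length two. -/

import Mathlib

/-- A fact `R(a₁,…,aₙ)`: relation name, primary-key values, non-key values. -/
structure DBFact where
  rel : ℕ
  key : List ℕ
  rest : List ℕ
deriving DecidableEq

/-- Two facts are key-equal if they have the same relation name and primary-key value. -/
def keyEq (A B : DBFact) : Prop := A.rel = B.rel ∧ A.key = B.key

instance (A B : DBFact) : Decidable (keyEq A B) :=
  inferInstanceAs (Decidable (_ ∧ _))

/-- A set of facts is consistent if it contains no two distinct key-equal facts. -/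
def Consistent (s : Finset DBFact) : Prop := ∀ A ∈ s, ∀ B ∈ s, keyEq A B → A = B

/-- A repair of `db` is a maximal (w.r.t. ⊆) consistent subset of `db`. -/
def Repair (db r : Finset DBFact) : Prop :=
  r ⊆ db ∧ Consistent r ∧ ∀ r', r' ⊆ db → Consistent r' → r ⊆ r' → r = r'

/-- A term is a variable (inl) or a constant (inr). -/
abbrev Term := ℕ ⊕ ℕ

/-- An atom `R(t₁,…,tₙ)` with key positions and non-key positions. -/
structure Atom where
  rel : ℕ
  key : List Term
  rest : List Term
deriving DecidableEq

def termVars (l : List Term) : Finset ℕ := (l.filterMap fun t => t.getLeft?).toFinset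

/-- Variables at primary-key positions of an atom. -/
def keyVars (F : Atom) : Finset ℕ := termVars F.key

/-- All variables of an atom. -/
def atomVars (F : Atom) : Finset ℕ := termVars F.key ∪ termVars F.rest

/-- A query (finite set of atoms) is self-join-free: no relation name occurs twice. -/
def SJF (q : Finset Atom) : Prop := ∀ F ∈ q, ∀ G ∈ q, F.rel = G.rel → F = G

/-- Apply a valuation (total map from variables to constants) to an atom, yielding a fact. -/
def applyVal (θ : ℕ → ℕ) (F : Atom) : DBFact :=
  ⟨F.rel, F.key.map (Sum.elim θ id), F.rest.map (Sum.elim θ id)⟩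

/-- Semantic implication of a functional dependency `X → Y` by a set of FDs
(two-tuple semantics, which is equivalent to the standard one for FDs). -/
def FDImplies (fds : Set (Set ℕ × Set ℕ)) (X Y : Set ℕ) : Prop :=
  ∀ θ μ : ℕ → ℕ,
    (∀ p ∈ fds, (∀ v ∈ p.1, θ v = μ v) → ∀ v ∈ p.2, θ v = μ v) →
    (∀ v ∈ X, θ v = μ v) → ∀ v ∈ Y, θ v = μ v

/-- `FD(q) = { key(F) → vars(F) : F ∈ q }`. -/
def FDs (q : Finset Atom) : Set (Set ℕ × Set ℕ) :=
  {p | ∃ F ∈ q, p = ((keyVars F : Set ℕ), (atomVars F : Set ℕ))}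

/-- `F⁺ = { x : FD(q \ {F}) ⊨ key(F) → x }`. -/
def plus (q : Finset Atom) (F : Atom) : Set ℕ :=
  {x | FDImplies (FDs (q.erase F)) (keyVars F : Set ℕ) {x}}

/-- One step of a witness for an attack by `F`: consecutive atoms share a variable outside `F⁺`. -/
def AttackStep (q : Finset Atom) (F : Atom) (A B : Atom) : Prop :=
  ¬ ((atomVars A ∩ atomVars B : Finset ℕ) : Set ℕ) ⊆ plus q F

/-- `F` attacks `G` in the attack graph of `q`. -/
def Attacks (q : Finset Atom) (F G : Atom) : Prop :=
  F ≠ G ∧ F ∈ q ∧ ∃ L : List Atom, (∀ A ∈ L, A ∈ q) ∧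
    List.Chain (AttackStep q F) F L ∧ (F :: L).getLast (List.cons_ne_nil F L) = G

/-- `F` attacks the variable `z`. -/
def AttacksVar (q : Finset Atom) (F : Atom) (z : ℕ) : Prop :=
  z ∉ plus q F ∧ F ∈ q ∧ ∃ L : List Atom, (∀ A ∈ L, A ∈ q) ∧
    List.Chain (AttackStep q F) F L ∧ z ∈ atomVars ((F :: L).getLast (List.cons_ne_nil F L))

/-- `r ⊨ ζ(q)` for a valuation `ζ` over the variable set `X`. -/
def Sat (r : Finset DBFact) (q : Finset Atom) (X : Finset ℕ) (ζ : ℕ → ℕ) : Prop :=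
  ∃ θ : ℕ → ℕ, (∀ v ∈ X, θ v = ζ v) ∧ ∀ F ∈ q, applyVal θ F ∈ r

/-- `r ⊨ q`. -/
def Sat0 (r : Finset DBFact) (q : Finset Atom) : Prop :=
  ∃ θ : ℕ → ℕ, ∀ F ∈ q, applyVal θ F ∈ r

/-- A fact `A` is relevant for `q` in `r` if `A ∈ θ(q) ⊆ r` for some valuation `θ`. -/
def Relevant (A : DBFact) (q : Finset Atom) (r : Finset DBFact) : Prop :=
  ∃ θ : ℕ → ℕ, (∃ F ∈ q, applyVal θ F = A) ∧ ∀ F ∈ q, applyVal θ F ∈ r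

/-- An attack `F → G` is strong if `FD(q) ⊭ key(F) → key(G)`. -/
def StrongAttack (q : Finset Atom) (F G : Atom) : Prop :=
  Attacks q F G ∧ ¬ FDImplies (FDs q) (keyVars F : Set ℕ) (keyVars G : Set ℕ)

section Helpers

/-- Syntactic closure. -/
inductive InCl (fds : Set (Set ℕ × Set ℕ)) (X : Set ℕ) : ℕ → Prop
  | base {v : ℕ} : v ∈ X → InCl fds X v
  | step {p : Set ℕ × Set ℕ} {v : ℕ} : p ∈ fds → (∀ u ∈ p.1, InCl fds X u) →
      v ∈ p.2 → InCl fds X v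

theorem InCl_iff (fds : Set (Set ℕ × Set ℕ)) (X : Set ℕ) (z : ℕ) :
    FDImplies fds X {z} ↔ InCl fds X z := by
  constructor
  · intro h
    classical
    let μ : ℕ → ℕ := fun w => if InCl fds X w then 0 else 1
    have hmu : ∀ w, μ w = 0 ↔ InCl fds X w := by
      intro w; simp only [μ]; split <;> simp_all
    have := h (fun _ => 0) μ ?_ ?_ z rfl
    · exact (hmu z).1 this.symm
    · intro p hp hag v hv
      have : InCl fds X v := InCl.step hp (fun u hu => (hmu u).1 (hag u hu).symm) hv
      simp [(hmu v).2 this]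
    · intro v hv; simp [(hmu v).2 (InCl.base hv)]
  · intro h
    induction h with
    | base hv => intro θ μ _ hX w hw; cases hw; exact hX _ hv
    | step hp _ hv ih =>
      intro θ μ hfds hX w hw; cases hw
      exact hfds _ hp (fun u hu => ih u hu θ μ hfds hX u rfl) _ hv

theorem plus_iff (q : Finset Atom) (F : Atom) (z : ℕ) :
    z ∈ plus q F ↔ InCl (FDs (q.erase F)) (keyVars F : Set ℕ) z :=
  InCl_iff _ _ z

theorem fd_mem {q : Finset Atom} {E : Atom} (h : E ∈ q) :
    ((keyVars E : Set ℕ), (atomVars E : Set ℕ)) ∈ FDs q := ⟨E, h, rfl⟩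

theorem keyVars_subset (A : Atom) : keyVars A ⊆ atomVars A := Finset.subset_union_left

theorem FDImplies_trans {fds : Set (Set ℕ × Set ℕ)} {X Y Z : Set ℕ}
    (h1 : FDImplies fds X Y) (h2 : FDImplies fds Y Z) : FDImplies fds X Z := by
  intro θ μ hf hX
  exact h2 θ μ hf (h1 θ μ hf hX)

theorem FDImplies_refl (fds : Set (Set ℕ × Set ℕ)) (X : Set ℕ) : FDImplies fds X X :=
  fun _ _ _ hX => hX

theorem chain_append_last {R : Atom → Atom → Prop} :
    ∀ (l1 : List Atom) (a : Atom) (l2 : List Atom), List.Chain R a l1 →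
      List.Chain R ((a :: l1).getLast (List.cons_ne_nil a l1)) l2 →
      List.Chain R a (l1 ++ l2) := by
  intro l1
  induction l1 with
  | nil => intro a l2 _ h2; simpa using h2
  | cons b t ih =>
    intro a l2 h1 h2
    unfold List.Chain at h1
    rw [List.chain_cons] at h1
    rw [List.cons_append]
    unfold List.Chain
    rw [List.chain_cons]
    refine ⟨h1.1, ih b l2 h1.2 ?_⟩
    rwa [List.getLast_cons (List.cons_ne_nil b t)] at h2

theorem getLast_append_right :
    ∀ (l1 l2 : List Atom) (a : Atom) (h : l2 ≠ []),
      (a :: (l1 ++ l2)).getLast (List.cons_ne_nil _ _) = l2.getLast h := by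
  intro l1
  induction l1 with
  | nil => intro l2 a h; exact List.getLast_cons h
  | cons b t ih =>
    intro l2 a h
    rw [List.getLast_cons (by simp : (b :: t) ++ l2 ≠ [])]
    exact ih l2 b h

theorem getLast_cons_concat (a b : Atom) (l : List Atom) :
    (a :: (l ++ [b])).getLast (List.cons_ne_nil _ _) = b := by
  rw [getLast_append_right l [b] a (by simp)]
  rfl

theorem chain_last_rel {R : Atom → Atom → Prop} :
    ∀ (l : List Atom) (a : Atom) (h : l ≠ []), List.Chain R a l →
      ∃ b, R b ((a :: l).getLast (List.cons_ne_nil a l)) := by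
  intro l
  induction l with
  | nil => intro a h; exact absurd rfl h
  | cons c t ih =>
    intro a _ hch
    unfold List.Chain at hch
    rw [List.chain_cons] at hch
    cases t with
    | nil => exact ⟨a, by simpa using hch.1⟩
    | cons d t' =>
      obtain ⟨b, hb⟩ := ih c (by simp) hch.2
      refine ⟨b, ?_⟩
      rwa [List.getLast_cons (List.cons_ne_nil c (d :: t'))]

/-- Extend an attack-variable witness through an atom `E` containing the variable. -/
theorem attacksVar_step {q : Finset Atom} {G E : Atom} {v u : ℕ}
    (hav : AttacksVar q G v) (hvE : v ∈ atomVars E) (hEq : E ∈ q)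
    (huE : u ∈ atomVars E) (hup : u ∉ plus q G) : AttacksVar q G u := by
  obtain ⟨hvp, hGq, L, hLq, hch, hlast⟩ := hav
  refine ⟨hup, hGq, L ++ [E], ?_, ?_, ?_⟩
  · intro A hA; rcases List.mem_append.1 hA with h | h
    · exact hLq A h
    · simp at h; subst h; exact hEq
  · refine chain_append_last L G [E] hch ?_
    refine List.Chain.cons ?_ List.Chain.nil
    intro hsub
    exact hvp (hsub (by exact_mod_cast Finset.mem_inter.2 ⟨hlast, hvE⟩))
  · rw [getLast_cons_concat]
    exact huE

theorem attacksVar_to_attacks {q : Finset Atom} {G F : Atom} {v : ℕ}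
    (hav : AttacksVar q G v) (hvF : v ∈ atomVars F) (hFq : F ∈ q) (hne : G ≠ F) :
    Attacks q G F := by
  obtain ⟨hvp, hGq, L, hLq, hch, hlast⟩ := hav
  refine ⟨hne, hGq, L ++ [F], ?_, ?_, ?_⟩
  · intro A hA; rcases List.mem_append.1 hA with h | h
    · exact hLq A h
    · simp at h; subst h; exact hFq
  · refine chain_append_last L G [F] hch ?_
    refine List.Chain.cons ?_ List.Chain.nil
    intro hsub
    exact hvp (hsub (by exact_mod_cast Finset.mem_inter.2 ⟨hlast, hvF⟩))
  · exact getLast_cons_concat G F L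

theorem attacks_last_step {q : Finset Atom} {F G : Atom} (h : Attacks q F G) :
    ∃ A, AttackStep q F A G := by
  obtain ⟨hne, _, L, _, hch, hlast⟩ := h
  cases L with
  | nil => simp at hlast; exact absurd hlast hne
  | cons b t =>
    obtain ⟨A, hA⟩ := chain_last_rel (b :: t) F (by simp) hch
    rw [hlast] at hA
    exact ⟨A, hA⟩

/-- If `key(G) ⊆ F⁺` then `F` cannot attack `G`. -/
theorem no_attack_of_key_subset {q : Finset Atom} {F G : Atom}
    (hGq : G ∈ q) (hne : G ≠ F)
    (hsub : (keyVars G : Set ℕ) ⊆ plus q F) : ¬ Attacks q F G := by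
  intro hatt
  have hGe : G ∈ q.erase F := Finset.mem_erase.2 ⟨hne, hGq⟩
  have hvars : (atomVars G : Set ℕ) ⊆ plus q F := by
    intro x hx
    exact (plus_iff q F x).2 (InCl.step (fd_mem hGe)
      (fun u hu => (plus_iff q F u).1 (hsub hu)) hx)
  obtain ⟨A, hA⟩ := attacks_last_step hatt
  exact hA (fun x hx => hvars (by
    have : x ∈ atomVars A ∩ atomVars G := by exact_mod_cast hx
    exact_mod_cast Finset.mem_inter.1 this |>.2))

/-- Core lemma ("claim X"): if `F` attacks `G` and `G` attacks a variable of `F⁺`,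
then `G` attacks `F`. -/
theorem claimX {q : Finset Atom} {F G : Atom} {z : ℕ}
    (hFG : Attacks q F G) (hz : AttacksVar q G z) (hzF : z ∈ plus q F) :
    Attacks q G F := by
  by_contra hGF
  have hne : F ≠ G := hFG.1
  have hFq : F ∈ q := hFG.2.1
  have factA : ∀ v, AttacksVar q G v → v ∉ atomVars F := by
    intro v hav hvF
    exact hGF (attacksVar_to_attacks hav hvF hFq hne.symm)
  have main : ∀ v, InCl (FDs (q.erase F)) (keyVars F : Set ℕ) v → ¬ AttacksVar q G v := by
    intro v h
    induction h with
    | @base v hv =>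
      intro hav
      exact factA _ hav (keyVars_subset F (by exact_mod_cast hv))
    | @step p v hp hprem hv ih =>
      intro hav
      obtain ⟨E, hEe, hpeq⟩ := hp
      have hEq : E ∈ q := Finset.mem_of_mem_erase hEe
      have hEF : E ≠ F := (Finset.mem_erase.1 hEe).1
      subst hpeq
      by_cases hEG : E = G
      · subst hEG
        exact no_attack_of_key_subset (Finset.mem_of_mem_erase hEe) hne.symm
          (fun u hu => (plus_iff q F u).2 (hprem u hu)) hFG
      · have hvE : v ∈ atomVars E := by exact_mod_cast hv
        have hkeyE : (keyVars E : Set ℕ) ⊆ plus q G := by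
          intro u hu
          by_contra hup
          exact ih u hu (attacksVar_step hav hvE hEq
            (keyVars_subset E (by exact_mod_cast hu)) hup)
        have hEe' : E ∈ q.erase G := Finset.mem_erase.2 ⟨hEG, hEq⟩
        have : v ∈ plus q G := (plus_iff q G v).2
          (InCl.step (fd_mem hEe') (fun u hu => (plus_iff q G u).1 (hkeyE hu)) hvE)
        exact hav.1 this
  exact main z ((plus_iff q F z).1 hzF) hz

/-- Extract a bad variable when a `G`-chain is not an `F`-chain. -/
theorem extract_bad {q : Finset Atom} {F G : Atom} (hGq : G ∈ q) :
    ∀ (L : List Atom) (A : Atom), (∀ x ∈ L, x ∈ q) →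
      List.Chain (AttackStep q G) A L → ¬ List.Chain (AttackStep q F) A L →
      (∃ L0 : List Atom, (∀ x ∈ L0, x ∈ q) ∧ List.Chain (AttackStep q G) G L0 ∧
        (G :: L0).getLast (List.cons_ne_nil G L0) = A) →
      ∃ z, z ∈ plus q F ∧ AttacksVar q G z := by
  intro L
  induction L with
  | nil => intro A _ _ hnc; exact absurd List.Chain.nil hnc
  | cons B L' ih =>
    intro A hq hch hnc hacc
    unfold List.Chain at hch hnc
    rw [List.chain_cons] at hch hnc
    by_cases hFAB : AttackStep q F A B
    · have hnc' : ¬ List.Chain (AttackStep q F) B L' := fun hc => hnc ⟨hFAB, hc⟩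
      obtain ⟨L0, hL0q, hch0, hlast0⟩ := hacc
      refine ih B (fun x hx => hq x (List.mem_cons_of_mem _ hx)) hch.2 hnc' ?_
      refine ⟨L0 ++ [B], ?_, ?_, ?_⟩
      · intro y hy; rcases List.mem_append.1 hy with h | h
        · exact hL0q y h
        · have hyB : y = B := by simpa using h
          rw [hyB]; exact hq B (by simp)
      · refine chain_append_last L0 G [B] hch0 ?_
        rw [hlast0]
        exact List.Chain.cons hch.1 List.Chain.nil
      · exact getLast_cons_concat G B L0
    · have hsub : ((atomVars A ∩ atomVars B : Finset ℕ) : Set ℕ) ⊆ plus q F :=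
        not_not.1 hFAB
      obtain ⟨z, hzm, hzp⟩ := Set.not_subset.1 hch.1
      obtain ⟨L0, hL0q, hch0, hlast0⟩ := hacc
      refine ⟨z, hsub hzm, hzp, hGq, L0, hL0q, hch0, ?_⟩
      rw [hlast0]
      have : z ∈ atomVars A ∩ atomVars B := by exact_mod_cast hzm
      exact (Finset.mem_inter.1 this).1

/-- Transitivity of attacks. -/
theorem attacks_trans {q : Finset Atom} {F G H : Atom}
    (hFG : Attacks q F G) (hGH : Attacks q G H) (hFH : F ≠ H) :
    Attacks q F H ∨ Attacks q G F := by
  obtain ⟨hGHne, hGq, L2, hL2q, hch2, hlast2⟩ := hGH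
  by_cases hc : List.Chain (AttackStep q F) G L2
  · left
    obtain ⟨hne, hFq, L1, hL1q, hch1, hlast1⟩ := hFG
    have hL2ne : L2 ≠ [] := by
      intro h; subst h; simp at hlast2; exact hGHne hlast2
    refine ⟨hFH, hFq, L1 ++ L2, ?_, ?_, ?_⟩
    · intro A hA; rcases List.mem_append.1 hA with h | h
      · exact hL1q A h
      · exact hL2q A h
    · refine chain_append_last L1 F L2 hch1 ?_
      rwa [hlast1]
    · rw [getLast_append_right L1 L2 F hL2ne]
      rw [List.getLast_cons hL2ne] at hlast2
      exact hlast2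
  · obtain ⟨z, hzF, hzav⟩ := extract_bad (F := F) hGq L2 G hL2q hch2 hc
      ⟨[], by simp, List.Chain.nil, by simp⟩
    exact Or.inr (claimX hFG hzav hzF)

end Helpers

section Cycle

theorem weak_of_not_strong {q : Finset Atom} {A B : Atom}
    (h : Attacks q A B) (hn : ¬ StrongAttack q A B) :
    FDImplies (FDs q) (keyVars A : Set ℕ) (keyVars B : Set ℕ) := by
  by_contra him
  exact hn ⟨h, him⟩

theorem main_lemma (q : Finset Atom) :
    ∀ m, 1 ≤ m → ∀ P : ℕ → Atom, (∀ j, Attacks q (P j) (P (j+1))) →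
      StrongAttack q (P m) (P 0) →
      ∃ F G, F ≠ G ∧ Attacks q F G ∧ Attacks q G F ∧
        (StrongAttack q F G ∨ StrongAttack q G F) := by
  intro m
  induction m using Nat.strong_induction_on with
  | _ m IH =>
    intro hm P hedge hstrong
    rcases Nat.lt_or_ge m 2 with hm2 | hm2
    · have hm1 : m = 1 := by omega
      subst hm1
      exact ⟨P 1, P 0, hstrong.1.1, hstrong.1, hedge 0, Or.inl hstrong⟩
    · have inner : ∀ j, j < m →
          (∀ i, j ≤ i → i < m →
            FDImplies (FDs q) (keyVars (P i) : Set ℕ) (keyVars (P j) : Set ℕ) ∧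
            FDImplies (FDs q) (keyVars (P j) : Set ℕ) (keyVars (P i) : Set ℕ)) →
          ∃ F G, F ≠ G ∧ Attacks q F G ∧ Attacks q G F ∧
            (StrongAttack q F G ∨ StrongAttack q G F) := by
        intro j
        induction j with
        | zero =>
          intro _ hEq
          by_cases h1 : P m = P 1
          · have h0 := hedge 0
            rw [← h1] at h0
            exact ⟨P m, P 0, hstrong.1.1, hstrong.1, h0, Or.inl hstrong⟩
          · rcases attacks_trans hstrong.1 (hedge 0) h1 with hA | hB
            · have hstrong' : StrongAttack q (P m) (P 1) := by
                refine ⟨hA, fun himp => hstrong.2 ?_⟩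
                exact FDImplies_trans himp (hEq 1 (by omega) (by omega)).1
              have hmm : m - 1 + 1 = m := by omega
              refine IH (m-1) (by omega) (by omega) (fun i => P (i+1))
                (fun j => hedge (j+1)) ?_
              show StrongAttack q (P (m - 1 + 1)) (P 1)
              rw [hmm]
              exact hstrong'
            · exact ⟨P m, P 0, hstrong.1.1, hstrong.1, hB, Or.inl hstrong⟩
        | succ j ihj =>
          intro hjm hEq
          have twoc : Attacks q (P (j+1)) (P j) →
              ∃ F G, F ≠ G ∧ Attacks q F G ∧ Attacks q G F ∧
                (StrongAttack q F G ∨ StrongAttack q G F) := by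
            intro hba
            by_cases hs1 : StrongAttack q (P j) (P (j+1))
            · exact ⟨P j, P (j+1), (hedge j).1, hedge j, hba, Or.inl hs1⟩
            by_cases hs2 : StrongAttack q (P (j+1)) (P j)
            · exact ⟨P j, P (j+1), (hedge j).1, hedge j, hba, Or.inr hs2⟩
            have w1 := weak_of_not_strong (hedge j) hs1
            have w2 := weak_of_not_strong hba hs2
            apply ihj (by omega)
            intro i hi1 hi2
            rcases Nat.eq_or_lt_of_le hi1 with he | hlt
            · rw [← he]
              exact ⟨FDImplies_refl _ _, FDImplies_refl _ _⟩
            · have h := hEq i (by omega) hi2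
              exact ⟨FDImplies_trans h.1 w2, FDImplies_trans w1 h.2⟩
          by_cases hpp : P j = P (j+2)
          · apply twoc
            have h := hedge (j+1)
            rwa [show j+1+1 = j+2 from rfl, ← hpp] at h
          · have hnext : Attacks q (P (j+1)) (P (j+2)) := hedge (j+1)
            rcases attacks_trans (hedge j) hnext hpp with hA | hB
            · refine IH (m-1) (by omega) (by omega)
                (fun i => if i ≤ j then P i else P (i+1)) ?_ ?_
              · intro i
                rcases lt_trichotomy i j with hij | hij | hij
                · simpa [show i ≤ j by omega, show i + 1 ≤ j by omega] using hedge i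
                · subst hij
                  simpa [show ¬ (i + 1 ≤ i) by omega] using hA
                · simpa [show ¬ (i ≤ j) by omega, show ¬ (i + 1 ≤ j) by omega]
                    using hedge (i+1)
              · have e1 : ¬ (m - 1 ≤ j) := by omega
                have e2 : (0:ℕ) ≤ j := by omega
                simp only [if_neg e1, if_pos e2]
                have hmm : m - 1 + 1 = m := by omega
                rw [hmm]
                exact hstrong
            · exact twoc hB
      exact inner (m-1) (by omega) (fun i hi1 hi2 => by
        have hieq : i = m-1 := by omega
        rw [hieq]
        exact ⟨FDImplies_refl _ _, FDImplies_refl _ _⟩)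

theorem aux_strong_cycle_two_cycle (q : Finset Atom)
    (h : ∃ (n : ℕ) (f : ZMod (n + 1) → Atom),
      (∀ i, Attacks q (f i) (f (i + 1))) ∧ ∃ i, StrongAttack q (f i) (f (i + 1))) :
    ∃ F G, F ≠ G ∧ Attacks q F G ∧ Attacks q G F ∧
      (StrongAttack q F G ∨ StrongAttack q G F) := by
  obtain ⟨n, f, hcyc, i0, hstrong⟩ := h
  rcases Nat.eq_zero_or_pos n with hn | hn
  · subst hn
    have hss : ∀ a b : ZMod (0+1), a = b := by decide
    exact absurd (congrArg f (hss i0 (i0+1))) hstrong.1.1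
  · have hone : ((n : ℕ) : ZMod (n+1)) + 1 = 0 := by
      have h := ZMod.natCast_self (n+1)
      push_cast at h
      linear_combination h
    refine main_lemma q n hn (fun j => f (i0 + 1 + (j : ZMod (n+1)))) ?_ ?_
    · intro j
      have h := hcyc (i0 + 1 + (j : ZMod (n+1)))
      have hc : ((j+1 : ℕ) : ZMod (n+1)) = (j : ZMod (n+1)) + 1 := by push_cast; ring
      simp only [hc]
      rw [show i0 + 1 + ((j : ZMod (n+1)) + 1) = i0 + 1 + (j : ZMod (n+1)) + 1 by ring]
      exact h
    · show StrongAttack q (f (i0 + 1 + ((n : ℕ) : ZMod (n+1)))) (f (i0 + 1 + ((0:ℕ) : ZMod (n+1))))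
      rw [show i0 + 1 + ((n : ℕ) : ZMod (n+1)) = i0 + (((n : ℕ) : ZMod (n+1)) + 1) by ring,
        hone, add_zero]
      norm_num
      exact hstrong

end Cycle

/-- If the attack graph of `q` contains a strong cycle, then it contains a strong
cycle of length two. -/
theorem strong_cycle_implies_strong_two_cycle (q : Finset Atom) (hq : SJF q)
    (h : ∃ (n : ℕ) (f : ZMod (n + 1) → Atom),
      (∀ i, Attacks q (f i) (f (i + 1))) ∧ ∃ i, StrongAttack q (f i) (f (i + 1))) :
    ∃ F G, F ≠ G ∧ Attacks q F G ∧ Attacks q G F ∧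
      (StrongAttack q F G ∨ StrongAttack q G F) := by
  exact aux_strong_cycle_two_cycle q h
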